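/- Let k ≥ 1 and u(z) = (1 + z^k)/√2. Then M = H^2 ⊖ ℂu is the closed span of {1 − z^k, z, …, z^{k−1}, z^{k+1}, z^{k+2}, …}, P_M 1 = (1 − z^k)/2, and M = {k₀(1−z^k)/2 + z k₁ (1+z^k)/√2 : (k₀,k₁) ∈ K} where K = {(k₀,k₁) ∈ H^2 × H^2 : √2 (S*)^{k−1} k₁ = −(S*)^k k₀}; K is invariant under S* ⊕ S*. -/

import Mathlib

open MeasureTheory Complex Real ComplexConjugate
open scoped ENNReal

noncomputable section

instance : Fact (0 < 2 * π) := ⟨by positivity⟩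

/-- The unit circle, modelled as `ℝ / 2πℤ`. -/
abbrev UnitCircle : Type := AddCircle (2 * π)

/-- Normalized Haar (Lebesgue) measure on the circle. -/
abbrev μc : Measure UnitCircle := AddCircle.haarAddCircle

/-- The space `L²(𝕋)`. -/
abbrev L2T : Type := Lp ℂ 2 μc

/-- The Hardy space `H²`, the closed span of `{eⁱⁿᵗ : n ≥ 0}` inside `L²(𝕋)`. -/
def H2 : Submodule ℂ L2T :=
  (Submodule.span ℂ (Set.range fun n : ℕ => (fourierLp 2 (n : ℤ) : L2T))).topologicalClosure

instance : CompleteSpace H2 :=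
  IsClosed.completeSpace_coe (hs := Submodule.isClosed_topologicalClosure _)

/-- The orthogonal projection `P : L²(𝕋) → H²`. -/
def PH2 : L2T →L[ℂ] H2 := Submodule.orthogonalProjectionOnto H2

/-- Multiplication of an `L²` function by an essentially bounded symbol. -/
def symbMul (g : UnitCircle → ℂ) (hg : MemLp g ∞ μc) (f : L2T) : L2T :=
  ((Lp.memLp f).smul hg).toLp (g • ⇑f)

/-- The Toeplitz operator `T_g f = P(gf)`, viewed as a map `L²(𝕋) → L²(𝕋)`
(its restriction to `H²` is the classical Toeplitz operator). -/
def Toeplitz (g : UnitCircle → ℂ) (hg : MemLp g ∞ μc) (f : L2T) : L2T :=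
  (PH2 (symbMul g hg f) : L2T)

/-- The boundary coordinate function `z = eⁱᵗ` on the circle. -/
def zfun : UnitCircle → ℂ := fun x => fourier 1 x

lemma zfun_memLinfty : MemLp zfun ∞ μc := by
  refine memLp_top_of_bound ((fourier 1).continuous.aestronglyMeasurable) 1 ?_
  filter_upwards with x
  simp [zfun, Circle.norm_coe]

lemma conj_zfun_memLinfty : MemLp (fun x => conj (zfun x)) ∞ μc := by
  refine memLp_top_of_bound (Continuous.aestronglyMeasurable (Complex.continuous_conj.comp ((fourier 1).continuous))) 1 ?_
  filter_upwards with x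
  simp [zfun, Circle.norm_coe]

/-- The backward shift `S* = T_{z̄}` on `L²`; its restriction to `H²` is the classical
backward shift `(S^*f)(z) = (f(z)-f(0))/z`. -/
def Sstar (f : L2T) : L2T := Toeplitz (fun x => conj (zfun x)) conj_zfun_memLinfty f

/-- Evaluation of (the analytic extension of) `f` at the origin: the mean value `f(0) = ∫ f`. -/
def ev0 (f : L2T) : ℂ := ∫ x, f x ∂μc

/-- The constant function `1` as an element of `L²(𝕋)` (it is `e⁰`). -/
def onefun : L2T := fourierLp 2 (0 : ℤ)

lemma zpow_memLinfty (m : ℕ) : MemLp (fun x => zfun x ^ m) ∞ μc := by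
  refine memLp_top_of_bound (Continuous.aestronglyMeasurable (by
    exact Continuous.pow (fourier 1).continuous m)) 1 ?_
  filter_upwards with x
  simp [zfun, Circle.norm_coe]

/-- An essentially bounded symbol is in particular square-integrable: the associated `L²`
element. -/
def toL2 (g : UnitCircle → ℂ) (hg : MemLp g ∞ μc) : L2T :=
  (hg.mono_exponent le_top).toLp g

/-- A bounded symbol `g` is *analytic* (i.e. belongs to `H^∞`) iff multiplication by `g`
preserves the Hardy space `H²`. -/
def IsAnalytic (g : UnitCircle → ℂ) (hg : MemLp g ∞ μc) : Prop :=
  ∀ f : L2T, f ∈ H2 → symbMul g hg f ∈ H2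

/-- A bounded symbol is *inner* if it is analytic and unimodular a.e. on the circle. -/
def IsInner (g : UnitCircle → ℂ) (hg : MemLp g ∞ μc) : Prop :=
  IsAnalytic g hg ∧ ∀ᵐ x ∂μc, ‖g x‖ = 1

/-- The subspace `θ·H²` of `L²(𝕋)`. -/
def mulH2 (θ : UnitCircle → ℂ) (hθ : MemLp θ ∞ μc) : Submodule ℂ L2T :=
  Submodule.span ℂ {f : L2T | ∃ h ∈ H2, f = symbMul θ hθ h}

/-- The model space `K_θ = H² ⊖ θH²`. -/
def Kmodel (θ : UnitCircle → ℂ) (hθ : MemLp θ ∞ μc) : Submodule ℂ L2T :=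
  H2 ⊓ (mulH2 θ hθ)ᗮ

instance (θ : UnitCircle → ℂ) (hθ : MemLp θ ∞ μc) : CompleteSpace (Kmodel θ hθ) := by
  refine IsClosed.completeSpace_coe (hs := ?_)
  have : ((Kmodel θ hθ : Submodule ℂ L2T) : Set L2T)
      = (H2 : Set L2T) ∩ ((mulH2 θ hθ)ᗮ : Set L2T) := rfl
  rw [this]
  exact (Submodule.isClosed_topologicalClosure _).inter (Submodule.isClosed_orthogonal _)

/-- An element `u ∈ H²` is *outer* if the polynomial multiples of `u` are dense in `H²`
(Beurling). -/
def IsOuterL2 (uL : L2T) : Prop :=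
  (Submodule.span ℂ
    (Set.range fun n : ℕ => symbMul (fun x => zfun x ^ n) (zpow_memLinfty n) uL)).topologicalClosure
    = H2

open scoped ComplexInnerProductSpace

instance (U : Submodule ℂ L2T) : CompleteSpace (H2 ⊓ Uᗮ : Submodule ℂ L2T) := by
  refine IsClosed.completeSpace_coe (hs := ?_)
  have : ((H2 ⊓ Uᗮ : Submodule ℂ L2T) : Set L2T) = (H2 : Set L2T) ∩ (Uᗮ : Set L2T) := rfl
  rw [this]
  exact (Submodule.isClosed_topologicalClosure _).inter (Submodule.isClosed_orthogonal _)

/-! ### Foundation: Fourier coefficients on L2T -/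

/-- basis vectors -/
def eL (n : ℤ) : L2T := fourierLp 2 n

/-- Fourier coefficient of an `L²` element. -/
def coeff (f : L2T) (n : ℤ) : ℂ := @fourierCoeff (2 * π) _ ℂ _ _ (⇑f) n

lemma coeff_eq_repr (f : L2T) (n : ℤ) : coeff f n = fourierBasis.repr f n :=
  (fourierBasis_repr f n).symm

lemma coeff_eq_inner (f : L2T) (n : ℤ) : coeff f n = ⟪eL n, f⟫ := by
  rw [coeff_eq_repr, fourierBasis.repr_apply_apply, coe_fourierBasis]; rfl

lemma coeff_add (f g : L2T) (n : ℤ) : coeff (f + g) n = coeff f n + coeff g n := by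
  simp [coeff_eq_inner, inner_add_right]

lemma coeff_sub (f g : L2T) (n : ℤ) : coeff (f - g) n = coeff f n - coeff g n := by
  simp [coeff_eq_inner, inner_sub_right]

lemma coeff_smul (c : ℂ) (f : L2T) (n : ℤ) : coeff (c • f) n = c * coeff f n := by
  simp [coeff_eq_inner, inner_smul_right]

lemma coeff_neg (f : L2T) (n : ℤ) : coeff (-f) n = - coeff f n := by
  simp [coeff_eq_inner, inner_neg_right]

lemma coeff_zero (n : ℤ) : coeff (0 : L2T) n = 0 := by
  simp [coeff_eq_inner]

lemma ext_coeff {f g : L2T} (h : ∀ n, coeff f n = coeff g n) : f = g := by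
  have h1 : HasSum (fun i => fourierBasis.repr f i • fourierBasis i) f :=
    fourierBasis.hasSum_repr f
  have h2 : HasSum (fun i => fourierBasis.repr g i • fourierBasis i) g :=
    fourierBasis.hasSum_repr g
  have : (fun i => fourierBasis.repr f i • (fourierBasis i : L2T))
      = fun i => fourierBasis.repr g i • fourierBasis i := by
    funext i
    rw [← coeff_eq_repr, ← coeff_eq_repr, h]
  rw [this] at h1
  exact h1.unique h2

lemma coeff_eL (m n : ℤ) : coeff (eL m) n = if n = m then 1 else 0 := by
  rw [coeff_eq_inner]
  exact orthonormal_iff_ite.mp (orthonormal_fourier (T := 2 * π)) n m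

/-! ### H2 membership via coefficients -/

lemma eL_mem_H2 {n : ℤ} (hn : 0 ≤ n) : eL n ∈ H2 := by
  apply Submodule.le_topologicalClosure
  apply Submodule.subset_span
  exact ⟨n.toNat, by simp [eL, Int.toNat_of_nonneg hn]⟩

lemma inner_eL_eL (m n : ℤ) : ⟪eL m, eL n⟫ = if m = n then 1 else 0 :=
  orthonormal_iff_ite.mp (orthonormal_fourier (T := 2 * π)) m n

lemma coeff_eq_zero_of_mem_H2 {f : L2T} (hf : f ∈ H2) {n : ℤ} (hn : n < 0) :
    coeff f n = 0 := by
  rw [coeff_eq_inner]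
  have hle : Submodule.span ℂ (Set.range fun m : ℕ => (fourierLp 2 (m : ℤ) : L2T))
      ≤ (Submodule.span ℂ {eL n})ᗮ := by
    rw [Submodule.span_le]
    rintro - ⟨m, rfl⟩
    intro x hx
    rw [Submodule.mem_span_singleton] at hx
    obtain ⟨c, rfl⟩ := hx
    rw [inner_smul_left]
    have h0 : ⟪eL n, eL (m : ℤ)⟫ = 0 := by
      rw [inner_eL_eL, if_neg (by omega)]
    have h0' : ⟪eL n, (fourierLp 2 (m : ℤ) : L2T)⟫ = 0 := h0
    rw [h0', mul_zero]
  have hmem : f ∈ (Submodule.span ℂ {eL n})ᗮ :=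
    Submodule.topologicalClosure_minimal _ hle (Submodule.isClosed_orthogonal _) hf
  rw [Submodule.mem_orthogonal] at hmem
  exact hmem (eL n) (Submodule.mem_span_singleton_self _)

lemma mem_H2_of_coeff {f : L2T} (hf : ∀ n < 0, coeff f n = 0) : f ∈ H2 := by
  have key : f - (Submodule.orthogonalProjectionOnto H2 f : L2T) = 0 := by
    apply ext_coeff
    intro n
    rw [coeff_zero, coeff_sub]
    rcases lt_or_ge n 0 with hn | hn
    · rw [hf n hn, coeff_eq_zero_of_mem_H2 (Submodule.orthogonalProjectionOnto H2 f).2 hn, sub_zero]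
    · have horth : f - (Submodule.orthogonalProjectionOnto H2 f : L2T) ∈ H2ᗮ :=
          Submodule.sub_starProjection_mem_orthogonal (K := H2) f
      rw [Submodule.mem_orthogonal] at horth
      have h2 := horth (eL n) (eL_mem_H2 hn)
      rw [inner_sub_right, sub_eq_zero] at h2
      rw [coeff_eq_inner, coeff_eq_inner, h2, sub_self]
  rw [sub_eq_zero.mp key]
  exact (Submodule.orthogonalProjectionOnto H2 f).2

lemma mem_H2_iff_coeff {f : L2T} : f ∈ H2 ↔ ∀ n < 0, coeff f n = 0 :=
  ⟨fun hf _ hn => coeff_eq_zero_of_mem_H2 hf hn, mem_H2_of_coeff⟩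

/-! ### Multiplier and shift coefficients -/

lemma fourierCoeff_congr_ae' {f g : UnitCircle → ℂ} (h : f =ᵐ[μc] g) (n : ℤ) :
    fourierCoeff f n = fourierCoeff g n := by
  unfold fourierCoeff
  exact integral_congr_ae (h.mono fun x hx => by dsimp only; rw [hx])

lemma coeff_symbMul_fourier {g : UnitCircle → ℂ} (hg : MemLp g ∞ μc) (m : ℤ)
    (hgm : ∀ x, g x = fourier m x) (f : L2T) (n : ℤ) :
    coeff (symbMul g hg f) n = coeff f (n - m) := by
  unfold coeff
  have h1 : ⇑(symbMul g hg f) =ᵐ[μc] g • ⇑f := MemLp.coeFn_toLp _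
  rw [fourierCoeff_congr_ae' h1]
  unfold fourierCoeff
  apply integral_congr_ae
  filter_upwards with x
  simp only [Pi.smul_apply', Pi.smul_apply, smul_eq_mul, hgm]
  rw [← mul_assoc, ← fourier_add]
  congr 2
  ring

lemma zfun_pow (m : ℕ) (x : UnitCircle) : zfun x ^ m = fourier (m : ℤ) x := by
  induction m with
  | zero => simp [fourier_zero]
  | succ j ih =>
      have h1 : (((j + 1 : ℕ)) : ℤ) = (j : ℤ) + 1 := by push_cast; ring
      rw [pow_succ, ih, h1, fourier_add]
      rfl

lemma coeff_symbMul_zpow (j : ℕ) (f : L2T) (n : ℤ) :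
    coeff (symbMul (fun x => zfun x ^ j) (zpow_memLinfty j) f) n = coeff f (n - j) :=
  coeff_symbMul_fourier _ j (fun x => zfun_pow j x) f n

lemma PH2_apply (h : L2T) : (PH2 h : L2T) = (Submodule.orthogonalProjectionOnto H2 h : L2T) := rfl

lemma coeff_PH2 (h : L2T) {n : ℤ} (hn : 0 ≤ n) :
    coeff ((PH2 h : L2T)) n = coeff h n := by
  rw [PH2_apply]
  have horth : h - (Submodule.orthogonalProjectionOnto H2 h : L2T) ∈ H2ᗮ :=
    Submodule.sub_starProjection_mem_orthogonal (K := H2) h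
  rw [Submodule.mem_orthogonal] at horth
  have h2 := horth (eL n) (eL_mem_H2 hn)
  rw [inner_sub_right, sub_eq_zero] at h2
  rw [coeff_eq_inner, coeff_eq_inner, h2]

lemma Sstar_mem_H2 (f : L2T) : Sstar f ∈ H2 := by
  have : Sstar f = ((PH2 (symbMul (fun x => conj (zfun x)) conj_zfun_memLinfty f) : H2) : L2T) :=
    rfl
  rw [this]
  exact (PH2 _).2

lemma coeff_Sstar (f : L2T) (n : ℤ) :
    coeff (Sstar f) n = if 0 ≤ n then coeff f (n + 1) else 0 := by
  split_ifs with hn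
  · have : Sstar f = ((PH2 (symbMul (fun x => conj (zfun x)) conj_zfun_memLinfty f) : H2) : L2T) :=
      rfl
    rw [this, coeff_PH2 _ hn]
    have := coeff_symbMul_fourier conj_zfun_memLinfty (-1)
      (fun x => by rw [fourier_neg]; rfl) f n
    rw [this]
    congr 1
  · exact coeff_eq_zero_of_mem_H2 (Sstar_mem_H2 f) (by omega)

lemma Sstar_iter_mem_H2 {f : L2T} (hf : f ∈ H2) (j : ℕ) : Sstar^[j] f ∈ H2 := by
  cases j with
  | zero => exact hf
  | succ i => rw [Function.iterate_succ_apply']; exact Sstar_mem_H2 _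

lemma coeff_Sstar_iter {f : L2T} (hf : f ∈ H2) (j : ℕ) (n : ℤ) :
    coeff (Sstar^[j] f) n = if 0 ≤ n then coeff f (n + j) else 0 := by
  induction j generalizing n with
  | zero =>
      simp only [Function.iterate_zero_apply, Nat.cast_zero, add_zero]
      split_ifs with hn
      · rfl
      · exact coeff_eq_zero_of_mem_H2 hf (by omega)
  | succ i ih =>
      rw [Function.iterate_succ_apply', coeff_Sstar]
      split_ifs with hn
      · rw [ih (n + 1), if_pos (by omega)]
        congr 1
        push_cast
        ring
      · rfl

/-! ### The vector u and the space M -/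

section Mlem

variable {k : ℕ} (hk : 1 ≤ k)
  (hu : MemLp (fun x => (1 + zfun x ^ k) / (Real.sqrt 2 : ℂ)) ∞ μc)

lemma sqrt2_ne : ((Real.sqrt 2 : ℝ) : ℂ) ≠ 0 := by
  simp only [ne_eq, Complex.ofReal_eq_zero]
  positivity

lemma toL2_u_eq :
    toL2 (fun x => (1 + zfun x ^ k) / (Real.sqrt 2 : ℂ)) hu
      = (Real.sqrt 2 : ℂ)⁻¹ • (eL 0 + eL k) := by
  apply MeasureTheory.Lp.ext
  have h1 : ⇑(toL2 (fun x => (1 + zfun x ^ k) / (Real.sqrt 2 : ℂ)) hu)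
      =ᵐ[μc] fun x => (1 + zfun x ^ k) / (Real.sqrt 2 : ℂ) := MemLp.coeFn_toLp _
  have h2 : ⇑((Real.sqrt 2 : ℂ)⁻¹ • (eL 0 + eL k))
      =ᵐ[μc] (Real.sqrt 2 : ℂ)⁻¹ • (⇑(eL 0 + eL k)) := Lp.coeFn_smul _ _
  have h3 : ⇑(eL 0 + eL k) =ᵐ[μc] ⇑(eL 0) + ⇑(eL (k : ℤ)) := Lp.coeFn_add _ _
  have h4 : ⇑(eL (0 : ℤ)) =ᵐ[μc] fourier 0 := coeFn_fourierLp 2 0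
  have h5 : ⇑(eL (k : ℤ)) =ᵐ[μc] fourier (k : ℤ) := coeFn_fourierLp 2 k
  filter_upwards [h1, h2, h3, h4, h5] with x e1 e2 e3 e4 e5
  rw [e1, e2]
  simp only [Pi.smul_apply, smul_eq_mul]
  rw [e3]
  simp only [Pi.add_apply]
  rw [e4, e5, fourier_zero, zfun_pow, div_eq_inv_mul]

lemma coeff_u (n : ℤ) :
    coeff (toL2 (fun x => (1 + zfun x ^ k) / (Real.sqrt 2 : ℂ)) hu) n
      = (Real.sqrt 2 : ℂ)⁻¹ * ((if n = 0 then 1 else 0) + if n = (k : ℤ) then 1 else 0) := by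
  rw [toL2_u_eq hu, coeff_smul, coeff_add, coeff_eL, coeff_eL]

lemma mem_M_iff {f : L2T} :
    f ∈ H2 ⊓ (Submodule.span ℂ
        {toL2 (fun x => (1 + zfun x ^ k) / (Real.sqrt 2 : ℂ)) hu})ᗮ
      ↔ (∀ n < 0, coeff f n = 0) ∧ coeff f 0 + coeff f (k : ℤ) = 0 := by
  rw [Submodule.mem_inf, mem_H2_iff_coeff]
  apply and_congr_right
  intro _
  rw [Submodule.mem_orthogonal_singleton_iff_inner_right]
  rw [toL2_u_eq hu, inner_smul_left, inner_add_left, ← coeff_eq_inner, ← coeff_eq_inner]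
  constructor
  · intro h
    rcases mul_eq_zero.mp h with h' | h'
    · exact absurd h' (by simp only [map_inv₀, ne_eq, inv_eq_zero]; exact
        fun hc => sqrt2_ne (by simpa using hc))
    · exact h'
  · intro h
    rw [h, mul_zero]

end Mlem

section Parts12

variable {k : ℕ} (hk : 1 ≤ k)
  (hu : MemLp (fun x => (1 + zfun x ^ k) / (Real.sqrt 2 : ℂ)) ∞ μc)

lemma H2_inf_orth_isClosed (U : Submodule ℂ L2T) :
    IsClosed ((H2 ⊓ Uᗮ : Submodule ℂ L2T) : Set L2T) := by
  have : ((H2 ⊓ Uᗮ : Submodule ℂ L2T) : Set L2T) = (H2 : Set L2T) ∩ (Uᗮ : Set L2T) := rfl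
  rw [this]
  exact (Submodule.isClosed_topologicalClosure _).inter (Submodule.isClosed_orthogonal _)

lemma part1 (hk : 1 ≤ k) :
    H2 ⊓ (Submodule.span ℂ
        {toL2 (fun x => (1 + zfun x ^ k) / (Real.sqrt 2 : ℂ)) hu})ᗮ
      = (Submodule.span ℂ
          ({(fourierLp 2 (0 : ℤ) : L2T) - (fourierLp 2 (k : ℤ) : L2T)}
            ∪ ((fun j : ℕ => (fourierLp 2 (j : ℤ) : L2T)) ''
                {j : ℕ | 1 ≤ j ∧ j ≠ k}))).topologicalClosure := by
  set M := H2 ⊓ (Submodule.span ℂ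
      {toL2 (fun x => (1 + zfun x ^ k) / (Real.sqrt 2 : ℂ)) hu})ᗮ with hM
  set S : Set L2T := {(fourierLp 2 (0 : ℤ) : L2T) - (fourierLp 2 (k : ℤ) : L2T)}
      ∪ ((fun j : ℕ => (fourierLp 2 (j : ℤ) : L2T)) '' {j : ℕ | 1 ≤ j ∧ j ≠ k}) with hS
  set N := (Submodule.span ℂ S).topologicalClosure with hN
  have hkz : (k : ℤ) ≠ 0 := by exact_mod_cast Nat.one_le_iff_ne_zero.mp hk
  have hNM : N ≤ M := by
    apply Submodule.topologicalClosure_minimal _ _ (H2_inf_orth_isClosed _)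
    rw [Submodule.span_le]
    rintro x (rfl | ⟨j, ⟨hj1, hjk⟩, rfl⟩)
    · rw [SetLike.mem_coe, mem_M_iff hu]
      constructor
      · intro n hn
        have : (fourierLp 2 (0 : ℤ) : L2T) - (fourierLp 2 (k : ℤ) : L2T) = eL 0 - eL k := rfl
        rw [this, coeff_sub, coeff_eL, coeff_eL, if_neg (by omega), if_neg (by omega)]
        ring
      · have : (fourierLp 2 (0 : ℤ) : L2T) - (fourierLp 2 (k : ℤ) : L2T) = eL 0 - eL k := rfl
        rw [this, coeff_sub, coeff_sub, coeff_eL, coeff_eL, coeff_eL, coeff_eL,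
          if_pos rfl, if_neg hkz, if_neg (Ne.symm hkz), if_pos rfl]
        ring
    · rw [SetLike.mem_coe, mem_M_iff hu]
      have he : (fourierLp 2 (j : ℤ) : L2T) = eL j := rfl
      have hjz : (j : ℤ) ≠ 0 := by exact_mod_cast Nat.one_le_iff_ne_zero.mp hj1
      have hjk' : (j : ℤ) ≠ (k : ℤ) := by exact_mod_cast hjk
      dsimp only
      constructor
      · intro n hn
        rw [he, coeff_eL, if_neg (by omega)]
      · rw [he, coeff_eL, coeff_eL, if_neg (Ne.symm hjz), if_neg (Ne.symm hjk')]
        ring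
  have hMN : M ≤ N := by
    intro f hf
    haveI : CompleteSpace N := IsClosed.completeSpace_coe (hs :=
      (Submodule.isClosed_topologicalClosure _))
    set g := f - (Submodule.orthogonalProjectionOnto N f : L2T) with hg
    have hPN : (Submodule.orthogonalProjectionOnto N f : L2T) ∈ N := (Submodule.orthogonalProjectionOnto N f).2
    have hgM : g ∈ M := M.sub_mem hf (hNM hPN)
    have hgo : g ∈ Nᗮ := Submodule.sub_starProjection_mem_orthogonal f
    rw [Submodule.mem_orthogonal] at hgo
    have hMc := (mem_M_iff hu).mp hgM
    have h01 : coeff g 0 - coeff g (k : ℤ) = 0 := by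
      have hgen : (fourierLp 2 (0 : ℤ) : L2T) - (fourierLp 2 (k : ℤ) : L2T) ∈ N :=
        Submodule.le_topologicalClosure _ (Submodule.subset_span (Or.inl rfl))
      have := hgo _ hgen
      have heq : ((fourierLp 2 (0 : ℤ) : L2T) - (fourierLp 2 (k : ℤ) : L2T)) = eL 0 - eL k := rfl
      rw [heq, inner_sub_left, ← coeff_eq_inner, ← coeff_eq_inner] at this
      -- this : conj? no: inner_sub_left keeps linear in left without conj since subtraction
      exact this
    have hzero : g = 0 := by
      apply ext_coeff
      intro n
      rw [coeff_zero]
      rcases lt_trichotomy n 0 with hn | rfl | hn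
      · exact hMc.1 n hn
      · have := hMc.2
        linear_combination (this + h01) / 2
      · by_cases hnk : n = (k : ℤ)
        · subst hnk
          have := hMc.2
          linear_combination (this - h01) / 2
        · have hgen : eL n ∈ N := by
            apply Submodule.le_topologicalClosure _ (Submodule.subset_span _)
            refine Or.inr ⟨n.toNat, ⟨by omega, ?_⟩, ?_⟩
            · intro h; apply hnk; omega
            · have : ((n.toNat : ℕ) : ℤ) = n := Int.toNat_of_nonneg (by omega)
              simp only [this]; rfl
          have := hgo _ hgen
          rw [← coeff_eq_inner] at this
          exact this
    have : f = (Submodule.orthogonalProjectionOnto N f : L2T) := by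
      rw [← sub_eq_zero]; exact hzero
    rw [this]
    exact hPN
  exact le_antisymm hMN hNM

lemma part2 (hk : 1 ≤ k) :
    ((Submodule.orthogonalProjectionOnto
          (H2 ⊓ (Submodule.span ℂ
            {toL2 (fun x => (1 + zfun x ^ k) / (Real.sqrt 2 : ℂ)) hu})ᗮ) onefun : L2T)
        = (2 : ℂ)⁻¹ • ((fourierLp 2 (0 : ℤ) : L2T) - (fourierLp 2 (k : ℤ) : L2T))) := by
  have hkz : (k : ℤ) ≠ 0 := by exact_mod_cast Nat.one_le_iff_ne_zero.mp hk
  set w : L2T := (2 : ℂ)⁻¹ • ((fourierLp 2 (0 : ℤ) : L2T) - (fourierLp 2 (k : ℤ) : L2T)) with hw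
  have hwe : w = (2 : ℂ)⁻¹ • (eL 0 - eL k) := rfl
  have hwM : w ∈ H2 ⊓ (Submodule.span ℂ
      {toL2 (fun x => (1 + zfun x ^ k) / (Real.sqrt 2 : ℂ)) hu})ᗮ := by
    rw [mem_M_iff hu]
    constructor
    · intro n hn
      rw [hwe, coeff_smul, coeff_sub, coeff_eL, coeff_eL, if_neg (by omega), if_neg (by omega)]
      ring
    · rw [hwe, coeff_smul, coeff_smul, coeff_sub, coeff_sub, coeff_eL, coeff_eL, coeff_eL,
        coeff_eL, if_pos rfl, if_neg hkz, if_neg (Ne.symm hkz), if_pos rfl]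
      ring
  have key := Submodule.eq_starProjection_of_mem_of_inner_eq_zero (u := onefun) hwM ?_
  · exact key
  · intro m hm
    have hsum := ((mem_M_iff hu).mp hm).2
    have h1 : ⟪onefun - w, m⟫ = coeff m 0 - (2:ℂ)⁻¹ * (coeff m 0 - coeff m (k : ℤ)) := by
      rw [inner_sub_left, hwe, inner_smul_left, inner_sub_left]
      have e0 : ⟪onefun, m⟫ = coeff m 0 := by rw [coeff_eq_inner]; rfl
      have hc2 : (starRingEnd ℂ) ((2:ℂ)⁻¹) = (2:ℂ)⁻¹ := by rw [map_inv₀]; norm_num [Complex.conj_ofNat]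
      rw [e0, ← coeff_eq_inner, ← coeff_eq_inner, hc2]
    rw [h1]
    linear_combination hsum / 2
end Parts12

/-! ### Part 4: invariance of K -/

lemma part4 {k : ℕ} (hk : 1 ≤ k) (k₀ : L2T) (hk0 : k₀ ∈ H2) (k₁ : L2T) (hk1 : k₁ ∈ H2)
    (hrel : (Real.sqrt 2 : ℂ) • Sstar^[k - 1] k₁ = - Sstar^[k] k₀) :
    (Real.sqrt 2 : ℂ) • Sstar^[k - 1] (Sstar k₁) = - Sstar^[k] (Sstar k₀) := by
  have hcast : ((k - 1 : ℕ) : ℤ) = (k : ℤ) - 1 := by omega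
  apply ext_coeff
  intro n
  have hL := congrArg (fun x => coeff x (n + 1)) hrel
  simp only [coeff_smul, coeff_neg] at hL ⊢
  rw [coeff_Sstar_iter hk1 (k-1) (n+1), coeff_Sstar_iter hk0 k (n+1)] at hL
  rw [coeff_Sstar_iter (Sstar_mem_H2 k₁) (k-1) n, coeff_Sstar_iter (Sstar_mem_H2 k₀) k n]
  rcases le_or_gt 0 n with hn | hn
  · rw [if_pos (by omega), if_pos (by omega)] at hL
    rw [if_pos hn, if_pos hn, coeff_Sstar, coeff_Sstar, if_pos (by omega), if_pos (by omega),
      hcast] at *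
    rw [show n + ((k:ℤ) - 1) + 1 = n + 1 + ((k:ℤ) - 1) by ring,
      show n + (k:ℤ) + 1 = n + 1 + (k:ℤ) by ring]
    exact hL
  · rw [if_neg (by omega), if_neg (by omega)]
    simp

/-! ### The combination map F -/

def Fcomb (k : ℕ) (k₀ k₁ : L2T) : L2T :=
  (2 : ℂ)⁻¹ • k₀ - (2 : ℂ)⁻¹ • symbMul (fun x => zfun x ^ k) (zpow_memLinfty k) k₀
    + (Real.sqrt 2 : ℂ)⁻¹ • symbMul (fun x => zfun x ^ 1) (zpow_memLinfty 1) k₁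
    + (Real.sqrt 2 : ℂ)⁻¹ • symbMul (fun x => zfun x ^ (k+1)) (zpow_memLinfty (k+1)) k₁

lemma coeFn_Fcomb (k : ℕ) (k₀ k₁ : L2T) :
    ⇑(Fcomb k k₀ k₁) =ᵐ[μc] fun x =>
      k₀ x * ((1 - zfun x ^ k) / 2)
        + zfun x * k₁ x * ((1 + zfun x ^ k) / (Real.sqrt 2 : ℂ)) := by
  have h1 : ⇑(Fcomb k k₀ k₁) =ᵐ[μc]
      ⇑((2 : ℂ)⁻¹ • k₀ - (2 : ℂ)⁻¹ • symbMul (fun x => zfun x ^ k) (zpow_memLinfty k) k₀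
        + (Real.sqrt 2 : ℂ)⁻¹ • symbMul (fun x => zfun x ^ 1) (zpow_memLinfty 1) k₁)
      + ⇑((Real.sqrt 2 : ℂ)⁻¹ • symbMul (fun x => zfun x ^ (k+1)) (zpow_memLinfty (k+1)) k₁) :=
    Lp.coeFn_add _ _
  have h2 := Lp.coeFn_add
    ((2 : ℂ)⁻¹ • k₀ - (2 : ℂ)⁻¹ • symbMul (fun x => zfun x ^ k) (zpow_memLinfty k) k₀)
    ((Real.sqrt 2 : ℂ)⁻¹ • symbMul (fun x => zfun x ^ 1) (zpow_memLinfty 1) k₁)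
  have h3 := Lp.coeFn_sub ((2 : ℂ)⁻¹ • k₀)
    ((2 : ℂ)⁻¹ • symbMul (fun x => zfun x ^ k) (zpow_memLinfty k) k₀)
  have h4 := Lp.coeFn_smul (2 : ℂ)⁻¹ k₀
  have h5 := Lp.coeFn_smul (2 : ℂ)⁻¹ (symbMul (fun x => zfun x ^ k) (zpow_memLinfty k) k₀)
  have h6 := Lp.coeFn_smul (Real.sqrt 2 : ℂ)⁻¹
    (symbMul (fun x => zfun x ^ 1) (zpow_memLinfty 1) k₁)
  have h7 := Lp.coeFn_smul (Real.sqrt 2 : ℂ)⁻¹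
    (symbMul (fun x => zfun x ^ (k+1)) (zpow_memLinfty (k+1)) k₁)
  have m1 : ⇑(symbMul (fun x => zfun x ^ k) (zpow_memLinfty k) k₀)
      =ᵐ[μc] (fun x => zfun x ^ k) • ⇑k₀ := MemLp.coeFn_toLp _
  have m2 : ⇑(symbMul (fun x => zfun x ^ 1) (zpow_memLinfty 1) k₁)
      =ᵐ[μc] (fun x => zfun x ^ 1) • ⇑k₁ := MemLp.coeFn_toLp _
  have m3 : ⇑(symbMul (fun x => zfun x ^ (k+1)) (zpow_memLinfty (k+1)) k₁)
      =ᵐ[μc] (fun x => zfun x ^ (k+1)) • ⇑k₁ := MemLp.coeFn_toLp _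
  filter_upwards [h1, h2, h3, h4, h5, h6, h7, m1, m2, m3]
    with x e1 e2 e3 e4 e5 e6 e7 f1 f2 f3
  rw [e1]
  simp only [Pi.add_apply]
  rw [e2]
  simp only [Pi.add_apply]
  rw [e3]
  simp only [Pi.sub_apply]
  rw [e4, e5, e6, e7]
  simp only [Pi.smul_apply, smul_eq_mul]
  rw [f1, f2, f3]
  simp only [Pi.smul_apply', Pi.smul_apply, smul_eq_mul]
  have hs2 : ((Real.sqrt 2 : ℝ) : ℂ) * ((Real.sqrt 2 : ℝ) : ℂ) = 2 := by
    rw [← Complex.ofReal_mul, Real.mul_self_sqrt (by norm_num)]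
    norm_num
  have hne : ((Real.sqrt 2 : ℝ) : ℂ) ≠ 0 := sqrt2_ne
  field_simp
  ring
lemma coeff_Fcomb (k : ℕ) (k₀ k₁ : L2T) (n : ℤ) :
    coeff (Fcomb k k₀ k₁) n
      = (2 : ℂ)⁻¹ * coeff k₀ n - (2 : ℂ)⁻¹ * coeff k₀ (n - k)
        + (Real.sqrt 2 : ℂ)⁻¹ * coeff k₁ (n - 1)
        + (Real.sqrt 2 : ℂ)⁻¹ * coeff k₁ (n - k - 1) := by
  unfold Fcomb
  rw [coeff_add, coeff_add, coeff_sub, coeff_smul, coeff_smul, coeff_smul, coeff_smul,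
    coeff_symbMul_zpow, coeff_symbMul_zpow, coeff_symbMul_zpow]
  norm_num
  rw [show n - ((k : ℤ) + 1) = n - k - 1 by ring]

/-! ### Canonical k₀, k₁ for part 3 -/

def K0f (k : ℕ) (f : L2T) : L2T :=
  f - symbMul (fun x => zfun x ^ k) (zpow_memLinfty k) (Sstar^[k] f) - Sstar^[k] f

def K1f (k : ℕ) (f : L2T) : L2T :=
  (Real.sqrt 2 : ℂ)⁻¹ • (Sstar f
    - symbMul (fun x => zfun x ^ (k-1)) (zpow_memLinfty (k-1)) (Sstar^[k] f)
    + Sstar^[k+1] f)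

lemma coeff_K0f {k : ℕ} (hk : 1 ≤ k) {f : L2T} (hf : f ∈ H2) (n : ℤ) :
    coeff (K0f k f) n = if n < 0 then 0
      else if n < (k : ℤ) then coeff f n - coeff f (n + k) else -(coeff f (n + k)) := by
  unfold K0f
  rw [coeff_sub, coeff_sub, coeff_symbMul_zpow, coeff_Sstar_iter hf, coeff_Sstar_iter hf]
  by_cases h1 : n < 0
  · rw [if_neg (by omega), if_neg (by omega), if_pos h1, coeff_eq_zero_of_mem_H2 hf h1]
    ring
  · by_cases h2 : n < (k : ℤ)
    · rw [if_neg (by omega), if_pos (by omega), if_neg h1, if_pos h2]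
      ring
    · rw [if_pos (by omega), if_pos (by omega), if_neg h1, if_neg h2,
        show n - (k : ℤ) + (k : ℤ) = n by ring]
      ring

lemma coeff_K1f {k : ℕ} (hk : 1 ≤ k) {f : L2T} (hf : f ∈ H2) (n : ℤ) :
    coeff (K1f k f) n = if n < 0 then 0
      else if n < (k : ℤ) - 1 then
        (Real.sqrt 2 : ℂ)⁻¹ * (coeff f (n + 1) + coeff f (n + k + 1))
      else (Real.sqrt 2 : ℂ)⁻¹ * coeff f (n + k + 1) := by
  have hc1 : ((k - 1 : ℕ) : ℤ) = (k : ℤ) - 1 := by omega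
  have hc2 : ((k + 1 : ℕ) : ℤ) = (k : ℤ) + 1 := by omega
  unfold K1f
  rw [coeff_smul, coeff_add, coeff_sub, coeff_symbMul_zpow, coeff_Sstar, coeff_Sstar_iter hf,
    coeff_Sstar_iter hf, hc1, hc2]
  by_cases h1 : n < 0
  · rw [if_neg (by omega), if_neg (by omega), if_neg (by omega), if_pos h1]
    ring
  · by_cases h2 : n < (k : ℤ) - 1
    · rw [if_pos (by omega), if_neg (by omega), if_pos (by omega), if_neg h1, if_pos h2,
        show n + ((k : ℤ) + 1) = n + k + 1 by ring]
      ring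
    · rw [if_pos (by omega), if_pos (by omega), if_pos (by omega), if_neg h1, if_neg h2,
        show n - ((k : ℤ) - 1) + (k : ℤ) = n + 1 by ring,
        show n + ((k : ℤ) + 1) = n + k + 1 by ring]
      ring

lemma K0f_mem_H2 {k : ℕ} (hk : 1 ≤ k) {f : L2T} (hf : f ∈ H2) : K0f k f ∈ H2 :=
  mem_H2_of_coeff fun n hn => by rw [coeff_K0f hk hf, if_pos hn]

lemma K1f_mem_H2 {k : ℕ} (hk : 1 ≤ k) {f : L2T} (hf : f ∈ H2) : K1f k f ∈ H2 :=
  mem_H2_of_coeff fun n hn => by rw [coeff_K1f hk hf, if_pos hn]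

lemma rel_K {k : ℕ} (hk : 1 ≤ k) {f : L2T} (hf : f ∈ H2) :
    (Real.sqrt 2 : ℂ) • Sstar^[k - 1] (K1f k f) = - Sstar^[k] (K0f k f) := by
  have hc1 : ((k - 1 : ℕ) : ℤ) = (k : ℤ) - 1 := by omega
  apply ext_coeff
  intro n
  rw [coeff_smul, coeff_neg, coeff_Sstar_iter (K1f_mem_H2 hk hf),
    coeff_Sstar_iter (K0f_mem_H2 hk hf)]
  by_cases hn : 0 ≤ n
  · rw [if_pos hn, if_pos hn, hc1, coeff_K1f hk hf, coeff_K0f hk hf,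
      if_neg (by omega), if_neg (by omega), if_neg (by omega), if_neg (by omega),
      show n + ((k : ℤ) - 1) + (k : ℤ) + 1 = n + (k : ℤ) + (k : ℤ) by ring,
      show n + (k : ℤ) + (k : ℤ) = n + (k : ℤ) + (k : ℤ) by ring]
    rw [← mul_assoc, mul_inv_cancel₀ sqrt2_ne, one_mul, neg_neg]
  · rw [if_neg hn, if_neg hn]
    ring

lemma sqrt2_inv_sq : ((Real.sqrt 2 : ℝ) : ℂ)⁻¹ * ((Real.sqrt 2 : ℝ) : ℂ)⁻¹ = (2 : ℂ)⁻¹ := by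
  rw [← mul_inv, ← Complex.ofReal_mul, Real.mul_self_sqrt (by norm_num)]
  norm_num

lemma f_eq_Fcomb {k : ℕ} (hk : 1 ≤ k) {f : L2T} (hf : f ∈ H2)
    (ha0 : coeff f 0 + coeff f (k : ℤ) = 0) :
    f = Fcomb k (K0f k f) (K1f k f) := by
  have hinv := sqrt2_inv_sq
  apply ext_coeff
  intro n
  rw [coeff_Fcomb, coeff_K0f hk hf n, coeff_K0f hk hf (n - k), coeff_K1f hk hf (n - 1),
    coeff_K1f hk hf (n - k - 1)]
  symm
  by_cases h1 : n < 0
  · rw [if_pos h1, if_pos (by omega), if_pos (by omega), if_pos (by omega),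
      coeff_eq_zero_of_mem_H2 hf h1]
    ring
  · by_cases h2 : n = 0
    · subst h2
      rw [if_neg (by omega), if_pos (by omega), if_pos (by omega), if_pos (by omega),
        if_pos (by omega), zero_add]
      linear_combination (-1/2 : ℂ) * ha0
    · by_cases h3 : n < (k : ℤ)
      · -- 0 < n < k
        rw [if_neg h1, if_pos h3, if_pos (by omega), if_neg (by omega), if_pos (by omega),
          if_pos (by omega), show n - 1 + 1 = n by ring, show n - 1 + (k : ℤ) + 1 = n + k by ring]
        linear_combination (coeff f n + coeff f (n + (k : ℤ))) * hinv
      · by_cases h4 : n = (k : ℤ)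
        · rw [h4, if_neg (by omega), if_neg (by omega), if_neg (by omega), if_pos (by omega),
            if_neg (by omega), if_neg (by omega), if_pos (by omega),
            show (k : ℤ) - k = 0 by ring, zero_add,
            show (k : ℤ) - 1 + (k : ℤ) + 1 = (k : ℤ) + (k : ℤ) by ring]
          linear_combination coeff f ((k : ℤ) + (k : ℤ)) * hinv - ha0 / 2
        · by_cases h5 : n < 2 * (k : ℤ)
          · -- k < n < 2k
            rw [if_neg (by omega), if_neg (by omega), if_neg (by omega), if_pos (by omega),
              if_neg (by omega), if_neg (by omega), if_neg (by omega), if_pos (by omega),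
              show n - (k : ℤ) + (k : ℤ) = n by ring,
              show n - 1 + (k : ℤ) + 1 = n + k by ring,
              show n - (k : ℤ) - 1 + 1 = n - k by ring,
              show n - (k : ℤ) - 1 + (k : ℤ) + 1 = n by ring]
            linear_combination (coeff f (n + (k : ℤ)) + coeff f (n - (k : ℤ)) + coeff f n) * hinv
          · -- n ≥ 2k
            rw [if_neg (by omega), if_neg (by omega), if_neg (by omega), if_neg (by omega),
              if_neg (by omega), if_neg (by omega), if_neg (by omega), if_neg (by omega),
              show n - (k : ℤ) + (k : ℤ) = n by ring,
              show n - 1 + (k : ℤ) + 1 = n + k by ring,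
              show n - (k : ℤ) - 1 + (k : ℤ) + 1 = n by ring]
            linear_combination (coeff f (n + (k : ℤ)) + coeff f n) * hinv

lemma part3 {k : ℕ} (hk : 1 ≤ k)
    (hu : MemLp (fun x => (1 + zfun x ^ k) / (Real.sqrt 2 : ℂ)) ∞ μc) :
    ((H2 ⊓ (Submodule.span ℂ
          {toL2 (fun x => (1 + zfun x ^ k) / (Real.sqrt 2 : ℂ)) hu})ᗮ :
        Submodule ℂ L2T) : Set L2T)
      = {f : L2T | ∃ k₀ ∈ H2, ∃ k₁ ∈ H2,
          ((Real.sqrt 2 : ℂ) • Sstar^[k - 1] k₁ = - Sstar^[k] k₀)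
          ∧ ⇑f =ᵐ[μc] fun x =>
              k₀ x * ((1 - zfun x ^ k) / 2)
                + zfun x * k₁ x * ((1 + zfun x ^ k) / (Real.sqrt 2 : ℂ))} := by
  ext f
  simp only [SetLike.mem_coe, Set.mem_setOf_eq]
  constructor
  · intro hfM
    obtain ⟨hfneg, ha0⟩ := (mem_M_iff hu).mp hfM
    have hfH : f ∈ H2 := mem_H2_of_coeff hfneg
    refine ⟨K0f k f, K0f_mem_H2 hk hfH, K1f k f, K1f_mem_H2 hk hfH, rel_K hk hfH, ?_⟩
    have hFf := f_eq_Fcomb hk hfH ha0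
    have hcoe : ⇑f = ⇑(Fcomb k (K0f k f) (K1f k f)) := by rw [← hFf]
    rw [hcoe]
    exact coeFn_Fcomb k _ _
  · rintro ⟨k₀, hk0, k₁, hk1, hrel, hae⟩
    have hfF : f = Fcomb k k₀ k₁ := MeasureTheory.Lp.ext (hae.trans (coeFn_Fcomb k k₀ k₁).symm)
    have h0 := congrArg (fun x => coeff x 0) hrel
    simp only [coeff_smul, coeff_neg] at h0
    rw [coeff_Sstar_iter hk1, coeff_Sstar_iter hk0, if_pos le_rfl, if_pos le_rfl,
      zero_add, zero_add, (show ((k - 1 : ℕ) : ℤ) = (k : ℤ) - 1 by omega)] at h0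
    have hcval : coeff k₁ ((k : ℤ) - 1) = (Real.sqrt 2 : ℂ)⁻¹ * -(coeff k₀ (k : ℤ)) := by
      rw [← h0, ← mul_assoc, inv_mul_cancel₀ sqrt2_ne, one_mul]
    rw [mem_M_iff hu]
    constructor
    · intro n hn
      rw [hfF, coeff_Fcomb,
        coeff_eq_zero_of_mem_H2 hk0 (n := n) (by omega),
        coeff_eq_zero_of_mem_H2 hk0 (n := n - k) (by omega),
        coeff_eq_zero_of_mem_H2 hk1 (n := n - 1) (by omega),
        coeff_eq_zero_of_mem_H2 hk1 (n := n - k - 1) (by omega)]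
      ring
    · rw [hfF, coeff_Fcomb, coeff_Fcomb,
        coeff_eq_zero_of_mem_H2 hk0 (n := (0 : ℤ) - k) (by omega),
        coeff_eq_zero_of_mem_H2 hk1 (n := (0 : ℤ) - 1) (by omega),
        coeff_eq_zero_of_mem_H2 hk1 (n := (0 : ℤ) - k - 1) (by omega),
        coeff_eq_zero_of_mem_H2 hk1 (n := (k : ℤ) - k - 1) (by omega),
        show (k : ℤ) - k = 0 by ring, show (k : ℤ) - 1 = (k : ℤ) - 1 by ring, hcval]
      linear_combination (-(coeff k₀ (k : ℤ))) * sqrt2_inv_sq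

/-- For `u = (1 + z^k)/√2` (`k ≥ 1`), the space `M = H² ⊖ ℂu` is the closed
span of `{1 − z^k} ∪ {z^j : j ≥ 1, j ≠ k}`, `P_M 1 = (1 − z^k)/2`, and `M` has the C-G-P
representation with `K = {(k₀,k₁) : √2 (S*)^{k−1} k₁ = −(S*)^k k₀}`, an `S* ⊕ S*`-invariant
subspace. -/
theorem hyperplane_orthogonal_to_one_add_zk
    (k : ℕ) (hk : 1 ≤ k)
    (hu : MemLp (fun x => (1 + zfun x ^ k) / (Real.sqrt 2 : ℂ)) ∞ μc) :
    (H2 ⊓ (Submodule.span ℂ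
        {toL2 (fun x => (1 + zfun x ^ k) / (Real.sqrt 2 : ℂ)) hu})ᗮ
      = (Submodule.span ℂ
          ({(fourierLp 2 (0 : ℤ) : L2T) - (fourierLp 2 (k : ℤ) : L2T)}
            ∪ ((fun j : ℕ => (fourierLp 2 (j : ℤ) : L2T)) ''
                {j : ℕ | 1 ≤ j ∧ j ≠ k}))).topologicalClosure)
    ∧ ((Submodule.orthogonalProjectionOnto
          (H2 ⊓ (Submodule.span ℂ
            {toL2 (fun x => (1 + zfun x ^ k) / (Real.sqrt 2 : ℂ)) hu})ᗮ) onefun : L2T)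
        = (2 : ℂ)⁻¹ • ((fourierLp 2 (0 : ℤ) : L2T) - (fourierLp 2 (k : ℤ) : L2T)))
    ∧ ((H2 ⊓ (Submodule.span ℂ
          {toL2 (fun x => (1 + zfun x ^ k) / (Real.sqrt 2 : ℂ)) hu})ᗮ :
        Submodule ℂ L2T) : Set L2T)
      = {f : L2T | ∃ k₀ ∈ H2, ∃ k₁ ∈ H2,
          ((Real.sqrt 2 : ℂ) • Sstar^[k - 1] k₁ = - Sstar^[k] k₀)
          ∧ ⇑f =ᵐ[μc] fun x =>
              k₀ x * ((1 - zfun x ^ k) / 2)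
                + zfun x * k₁ x * ((1 + zfun x ^ k) / (Real.sqrt 2 : ℂ))}
    ∧ (∀ k₀ ∈ H2, ∀ k₁ ∈ H2,
        ((Real.sqrt 2 : ℂ) • Sstar^[k - 1] k₁ = - Sstar^[k] k₀) →
        (Real.sqrt 2 : ℂ) • Sstar^[k - 1] (Sstar k₁) = - Sstar^[k] (Sstar k₀)) := by
  exact ⟨part1 hu hk, part2 hu hk, part3 hk hu,
    fun k₀ hk0 k₁ hk1 hrel => part4 hk k₀ hk0 k₁ hk1 hrel⟩
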